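/- Let n ≥ 1 and let h : Fin n → Fin n → Fin n → ℝ be totally symmetric. Define H : Fin n → ℝ by H(m) = (1/n)·Σ_i h(m,i,i), define c(m,i,j) = (n/(n+2))·(H(m)δ_{ij} + H(i)δ_{jm} + H(j)δ_{im}), and set h̃ = h − c. Then h̃ is totally symmetric and trace-free, and Σ_{m,i,j} h̃(m,i,j)² = Σ_{m,i,j} h(m,i,j)² − (3n²/(n+2))·Σ_m H(m)². -/

import Mathlib

open BigOperators

/-- For a totally symmetric 3-tensor `h` on `Fin n`, with mean curvature
`H m = (1/n) Σ_i h m i i` and umbilical part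
`c m i j = (n/(n+2)) (H m δ_{ij} + H i δ_{jm} + H j δ_{im})`, the tensor `h̃ = h - c`
is totally symmetric, trace-free, and satisfies
`Σ h̃² = Σ h² - (3n²/(n+2)) Σ H²`. -/
theorem traceFree_second_fundamental_form (n : ℕ) (hn : 1 ≤ n)
    (h : Fin n → Fin n → Fin n → ℝ)
    (hsymm₁ : ∀ i j k, h i j k = h j i k)
    (hsymm₂ : ∀ i j k, h i j k = h i k j) :
    let H : Fin n → ℝ := fun m => (1 / (n : ℝ)) * ∑ i, h m i i
    let c : Fin n → Fin n → Fin n → ℝ := fun m i j =>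
      ((n : ℝ) / ((n : ℝ) + 2)) *
        (H m * (if i = j then (1 : ℝ) else 0) + H i * (if j = m then (1 : ℝ) else 0)
          + H j * (if i = m then (1 : ℝ) else 0))
    let ht : Fin n → Fin n → Fin n → ℝ := fun m i j => h m i j - c m i j
    (∀ i j k, ht i j k = ht j i k) ∧ (∀ i j k, ht i j k = ht i k j) ∧
    (∀ k, ∑ i, ht i i k = 0) ∧
    (∑ m, ∑ i, ∑ j, (ht m i j) ^ 2
      = (∑ m, ∑ i, ∑ j, (h m i j) ^ 2) - (3 * (n : ℝ) ^ 2 / ((n : ℝ) + 2)) * ∑ m, (H m) ^ 2) := by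
  intro H c ht
  have hnpos : (0 : ℝ) < n := by exact_mod_cast hn
  have hn0 : (n : ℝ) ≠ 0 := ne_of_gt hnpos
  have hn2 : (n : ℝ) + 2 ≠ 0 := by linarith
  have hdel : ∀ a b : Fin n, (if a = b then (1 : ℝ) else 0) = (if b = a then 1 else 0) := by
    intro a b
    by_cases hab : a = b
    · simp [hab]
    · simp [hab, Ne.symm hab]
  have htr : ∀ m, ∑ i, h m i i = (n : ℝ) * H m := by
    intro m
    simp only [H]
    field_simp
  -- symmetry 1
  have hts1 : ∀ i j k, ht i j k = ht j i k := by
    intro i j k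
    simp only [ht, c, hsymm₁ i j k]
    rw [hdel k i, hdel j i, hdel k j]
    ring
  -- symmetry 2
  have hts2 : ∀ i j k, ht i j k = ht i k j := by
    intro i j k
    simp only [ht, c, hsymm₂ i j k]
    rw [hdel j k]
    ring
  -- trace-free
  have htrace : ∀ k, ∑ i, ht i i k = 0 := by
    intro k
    have h1 : ∀ i : Fin n, h i i k = h k i i := by
      intro i
      rw [hsymm₂ i i k, hsymm₁ i k i]
    have e1 : ∑ i, h i i k = (n : ℝ) * H k := by
      rw [Finset.sum_congr rfl fun i _ => h1 i, htr k]
    have point : ∀ i : Fin n, ht i i k = h i i k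
        - ((n : ℝ) / ((n : ℝ) + 2)) * (H i * (if i = k then (1 : ℝ) else 0))
        - ((n : ℝ) / ((n : ℝ) + 2)) * (H i * (if k = i then (1 : ℝ) else 0))
        - ((n : ℝ) / ((n : ℝ) + 2)) * H k := by
      intro i
      simp only [ht, c]
      rw [if_pos trivial]
      ring
    rw [Finset.sum_congr rfl fun i _ => point i]
    simp only [Finset.sum_sub_distrib, ← Finset.mul_sum]
    have s1 : ∑ i, H i * (if i = k then (1 : ℝ) else 0) = H k := by simp
    have s2 : ∑ i, H i * (if k = i then (1 : ℝ) else 0) = H k := by simp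
    rw [e1, s1, s2]
    simp only [Finset.sum_const, Finset.card_univ, Fintype.card_fin, nsmul_eq_mul]
    field_simp
    ring
  refine ⟨hts1, hts2, htrace, ?_⟩
  -- auxiliary traces of ht
  have htr3 : ∀ m, ∑ i, ht m i i = 0 := by
    intro m
    have : ∀ i, ht m i i = ht i i m := fun i => by rw [hts1 m i i, hts2 i m i]
    rw [Finset.sum_congr rfl fun i _ => this i, htrace m]
  -- Σ ht·c = 0
  have E1 : ∑ m, ∑ i, ∑ j, ht m i j * H m * (if i = j then (1 : ℝ) else 0) = 0 := by
    have inner : ∀ m i, ∑ j, ht m i j * H m * (if i = j then (1 : ℝ) else 0)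
        = ht m i i * H m := by
      intro m i
      simp
    calc ∑ m, ∑ i, ∑ j, ht m i j * H m * (if i = j then (1 : ℝ) else 0)
        = ∑ m, ∑ i, ht m i i * H m :=
          Finset.sum_congr rfl fun m _ => Finset.sum_congr rfl fun i _ => inner m i
      _ = ∑ m : Fin n, (0 : ℝ) := by
          refine Finset.sum_congr rfl fun m _ => ?_
          rw [← Finset.sum_mul, htr3 m, zero_mul]
      _ = 0 := by simp
  have E2 : ∑ m, ∑ i, ∑ j, ht m i j * H i * (if j = m then (1 : ℝ) else 0) = 0 := by
    have inner : ∀ m i, ∑ j, ht m i j * H i * (if j = m then (1 : ℝ) else 0)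
        = ht m i m * H i := by
      intro m i
      simp
    calc ∑ m, ∑ i, ∑ j, ht m i j * H i * (if j = m then (1 : ℝ) else 0)
        = ∑ m, ∑ i, ht m i m * H i :=
          Finset.sum_congr rfl fun m _ => Finset.sum_congr rfl fun i _ => inner m i
      _ = ∑ i, ∑ m, ht m i m * H i := Finset.sum_comm
      _ = ∑ i : Fin n, (0 : ℝ) := by
          refine Finset.sum_congr rfl fun i _ => ?_
          have : ∀ m, ht m i m = ht m m i := fun m => hts2 m i m
          rw [Finset.sum_congr rfl fun m _ => congrArg (· * H i) (this m),
            ← Finset.sum_mul, htrace i, zero_mul]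
      _ = 0 := by simp
  have E3 : ∑ m, ∑ i, ∑ j, ht m i j * H j * (if i = m then (1 : ℝ) else 0) = 0 := by
    have inner : ∀ m, ∑ i, ∑ j, ht m i j * H j * (if i = m then (1 : ℝ) else 0)
        = ∑ j, ht m m j * H j := by
      intro m
      have step : ∀ i, ∑ j, ht m i j * H j * (if i = m then (1 : ℝ) else 0)
          = (if i = m then (1 : ℝ) else 0) * ∑ j, ht m i j * H j := by
        intro i
        rw [Finset.mul_sum]
        exact Finset.sum_congr rfl fun j _ => by ring
      rw [Finset.sum_congr rfl fun i _ => step i]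
      simp
    calc ∑ m, ∑ i, ∑ j, ht m i j * H j * (if i = m then (1 : ℝ) else 0)
        = ∑ m, ∑ j, ht m m j * H j := Finset.sum_congr rfl fun m _ => inner m
      _ = ∑ j, ∑ m, ht m m j * H j := Finset.sum_comm
      _ = ∑ j : Fin n, (0 : ℝ) := by
          refine Finset.sum_congr rfl fun j _ => ?_
          rw [← Finset.sum_mul, htrace j, zero_mul]
      _ = 0 := by simp
  have step2 : ∑ m, ∑ i, ∑ j, ht m i j * c m i j = 0 := by
    have expand : ∀ m i j, ht m i j * c m i j
        = ((n : ℝ) / ((n : ℝ) + 2)) * (ht m i j * H m * (if i = j then (1 : ℝ) else 0))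
          + ((n : ℝ) / ((n : ℝ) + 2)) * (ht m i j * H i * (if j = m then (1 : ℝ) else 0))
          + ((n : ℝ) / ((n : ℝ) + 2)) * (ht m i j * H j * (if i = m then (1 : ℝ) else 0)) := by
      intro m i j
      simp only [c]
      ring
    rw [Finset.sum_congr rfl fun m _ => Finset.sum_congr rfl fun i _ =>
      Finset.sum_congr rfl fun j _ => expand m i j]
    simp only [Finset.sum_add_distrib, ← Finset.mul_sum]
    rw [E1, E2, E3]
    ring
  -- Σ h·c computations
  have A1 : ∑ m, ∑ i, ∑ j, h m i j * H m * (if i = j then (1 : ℝ) else 0)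
      = (n : ℝ) * ∑ m, H m ^ 2 := by
    have inner : ∀ m i, ∑ j, h m i j * H m * (if i = j then (1 : ℝ) else 0)
        = h m i i * H m := by
      intro m i
      simp
    calc ∑ m, ∑ i, ∑ j, h m i j * H m * (if i = j then (1 : ℝ) else 0)
        = ∑ m, ∑ i, h m i i * H m :=
          Finset.sum_congr rfl fun m _ => Finset.sum_congr rfl fun i _ => inner m i
      _ = ∑ m, (n : ℝ) * H m ^ 2 := by
          refine Finset.sum_congr rfl fun m _ => ?_
          rw [← Finset.sum_mul, htr m]
          ring
      _ = (n : ℝ) * ∑ m, H m ^ 2 := (Finset.mul_sum _ _ _).symm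
  have A2 : ∑ m, ∑ i, ∑ j, h m i j * H i * (if j = m then (1 : ℝ) else 0)
      = (n : ℝ) * ∑ m, H m ^ 2 := by
    have inner : ∀ m i, ∑ j, h m i j * H i * (if j = m then (1 : ℝ) else 0)
        = h m i m * H i := by
      intro m i
      simp
    calc ∑ m, ∑ i, ∑ j, h m i j * H i * (if j = m then (1 : ℝ) else 0)
        = ∑ m, ∑ i, h m i m * H i :=
          Finset.sum_congr rfl fun m _ => Finset.sum_congr rfl fun i _ => inner m i
      _ = ∑ i, ∑ m, h m i m * H i := Finset.sum_comm
      _ = ∑ i, (n : ℝ) * H i ^ 2 := by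
          refine Finset.sum_congr rfl fun i _ => ?_
          have : ∀ m, h m i m = h i m m := fun m => hsymm₁ m i m
          rw [Finset.sum_congr rfl fun m _ => congrArg (· * H i) (this m),
            ← Finset.sum_mul, htr i]
          ring
      _ = (n : ℝ) * ∑ m, H m ^ 2 := (Finset.mul_sum _ _ _).symm
  have A3 : ∑ m, ∑ i, ∑ j, h m i j * H j * (if i = m then (1 : ℝ) else 0)
      = (n : ℝ) * ∑ m, H m ^ 2 := by
    have inner : ∀ m, ∑ i, ∑ j, h m i j * H j * (if i = m then (1 : ℝ) else 0)
        = ∑ j, h m m j * H j := by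
      intro m
      have step : ∀ i, ∑ j, h m i j * H j * (if i = m then (1 : ℝ) else 0)
          = (if i = m then (1 : ℝ) else 0) * ∑ j, h m i j * H j := by
        intro i
        rw [Finset.mul_sum]
        exact Finset.sum_congr rfl fun j _ => by ring
      rw [Finset.sum_congr rfl fun i _ => step i]
      simp
    calc ∑ m, ∑ i, ∑ j, h m i j * H j * (if i = m then (1 : ℝ) else 0)
        = ∑ m, ∑ j, h m m j * H j := Finset.sum_congr rfl fun m _ => inner m
      _ = ∑ j, ∑ m, h m m j * H j := Finset.sum_comm
      _ = ∑ j, (n : ℝ) * H j ^ 2 := by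
          refine Finset.sum_congr rfl fun j _ => ?_
          have : ∀ m, h m m j = h j m m := fun m => by rw [hsymm₂ m m j, hsymm₁ m j m]
          rw [Finset.sum_congr rfl fun m _ => congrArg (· * H j) (this m),
            ← Finset.sum_mul, htr j]
          ring
      _ = (n : ℝ) * ∑ m, H m ^ 2 := (Finset.mul_sum _ _ _).symm
  have step3 : ∑ m, ∑ i, ∑ j, h m i j * c m i j
      = 3 * (n : ℝ) ^ 2 / ((n : ℝ) + 2) * ∑ m, H m ^ 2 := by
    have expand : ∀ m i j, h m i j * c m i j
        = ((n : ℝ) / ((n : ℝ) + 2)) * (h m i j * H m * (if i = j then (1 : ℝ) else 0))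
          + ((n : ℝ) / ((n : ℝ) + 2)) * (h m i j * H i * (if j = m then (1 : ℝ) else 0))
          + ((n : ℝ) / ((n : ℝ) + 2)) * (h m i j * H j * (if i = m then (1 : ℝ) else 0)) := by
      intro m i j
      simp only [c]
      ring
    rw [Finset.sum_congr rfl fun m _ => Finset.sum_congr rfl fun i _ =>
      Finset.sum_congr rfl fun j _ => expand m i j]
    simp only [Finset.sum_add_distrib, ← Finset.mul_sum]
    rw [A1, A2, A3]
    field_simp
    ring
  -- final assembly
  have expand : ∀ m i j, ht m i j ^ 2
      = h m i j ^ 2 - h m i j * c m i j - ht m i j * c m i j := by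
    intro m i j
    simp only [ht]
    ring
  calc ∑ m, ∑ i, ∑ j, ht m i j ^ 2
      = ∑ m, ∑ i, ∑ j, (h m i j ^ 2 - h m i j * c m i j - ht m i j * c m i j) :=
        Finset.sum_congr rfl fun m _ => Finset.sum_congr rfl fun i _ =>
          Finset.sum_congr rfl fun j _ => expand m i j
    _ = (∑ m, ∑ i, ∑ j, h m i j ^ 2) - (∑ m, ∑ i, ∑ j, h m i j * c m i j)
        - ∑ m, ∑ i, ∑ j, ht m i j * c m i j := by
        simp only [Finset.sum_sub_distrib]
    _ = (∑ m, ∑ i, ∑ j, h m i j ^ 2)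
        - 3 * (n : ℝ) ^ 2 / ((n : ℝ) + 2) * ∑ m, H m ^ 2 := by
        rw [step2, step3]
        ring
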